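/- Let $X$ and $Y$ be Banach spaces and $N$ an absolute normalized norm on $\mathbb{R}^2$. If $x \in S_X$ and $y \in S_Y$ are super $\Delta$-points, then $(ax, by)$ is a super $\Delta$-point in $X \oplus_N Y$ for every $(a,b) \in \mathbb{R}^2$ with $N(a,b) = 1$. -/

import Mathlib

open Metric Set Pointwise Filter Topology

variable {X : Type*} [NormedAddCommGroup X] [NormedSpace ℝ X]

def sliceSet (f : X →L[ℝ] ℝ) (δ : ℝ) : Set X :=
  {y ∈ closedBall (0 : X) 1 | 1 - δ < f y}

def IsSlice (S : Set X) : Prop :=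
  ∃ (f : X →L[ℝ] ℝ) (δ : ℝ), ‖f‖ = 1 ∧ 0 < δ ∧ S = sliceSet f δ

def IsCCS (C : Set X) : Prop :=
  ∃ (n : ℕ) (l : Fin n → ℝ) (S : Fin n → Set X),
    (∀ i, 0 < l i) ∧ (∑ i, l i) = 1 ∧ (∀ i, IsSlice (S i)) ∧
    C = ∑ i, l i • S i

def RelWeakOpen (V : Set X) : Prop :=
  ∃ U : Set X, IsOpen (show Set (WeakSpace ℝ X) from U) ∧ V = U ∩ closedBall 0 1

def weakClosure (A : Set X) : Set X :=
  @closure (WeakSpace ℝ X) _ A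

def SuperDeltaPoint (x : X) : Prop :=
  ∀ V : Set X, RelWeakOpen V → x ∈ V → ∀ ε > 0, ∃ y ∈ V, 2 - ε < ‖x - y‖

def SuperDaugavetPoint (x : X) : Prop :=
  ∀ V : Set X, RelWeakOpen V → V.Nonempty → ∀ ε > 0, ∃ y ∈ V, 2 - ε < ‖x - y‖

def CcsDeltaPoint (x : X) : Prop :=
  ∀ C : Set X, IsCCS C → x ∈ C → ∀ ε > 0, ∃ y ∈ C, 2 - ε < ‖x - y‖

def CcsDaugavetPoint (x : X) : Prop :=
  ∀ C : Set X, IsCCS C → ∀ ε > 0, ∃ y ∈ C, 2 - ε < ‖x - y‖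

section Aux

variable (N : ℝ → ℝ → ℝ)

lemma absNorm_convex (htri : ∀ a b c d : ℝ, N (a + c) (b + d) ≤ N a b + N c d)
    (hhom : ∀ t a b : ℝ, N (t * a) (t * b) = |t| * N a b)
    {t s : ℝ} (ht : 0 ≤ t) (hs : 0 ≤ s) (a b c d : ℝ) :
    N (t * a + s * c) (t * b + s * d) ≤ t * N a b + s * N c d := by
  calc N (t * a + s * c) (t * b + s * d) ≤ N (t * a) (t * b) + N (s * c) (s * d) :=
        htri _ _ _ _
    _ = t * N a b + s * N c d := by rw [hhom, hhom, abs_of_nonneg ht, abs_of_nonneg hs]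

lemma absNorm_mono_left (habs : ∀ a b : ℝ, N a b = N |a| |b|)
    (htri : ∀ a b c d : ℝ, N (a + c) (b + d) ≤ N a b + N c d)
    (hhom : ∀ t a b : ℝ, N (t * a) (t * b) = |t| * N a b)
    {a a' : ℝ} (b : ℝ) (h0 : 0 ≤ a') (h1 : a' ≤ a) : N a' b ≤ N a b := by
  rcases eq_or_lt_of_le (h0.trans h1) with h | hapos
  · have ha : a = 0 := h.symm
    have ha' : a' = 0 := le_antisymm (ha ▸ h1) h0
    rw [ha, ha']
  · have ha : a ≠ 0 := ne_of_gt hapos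
    have ht : 0 ≤ (a + a') / (2 * a) := div_nonneg (by linarith) (by linarith)
    have hs : 0 ≤ (a - a') / (2 * a) := div_nonneg (by linarith) (by linarith)
    have hts : (a + a') / (2 * a) + (a - a') / (2 * a) = 1 := by field_simp; ring
    have h1' : ((a + a') / (2 * a)) * a + ((a - a') / (2 * a)) * (-a) = a' := by
      field_simp; ring
    have h2' : ((a + a') / (2 * a)) * b + ((a - a') / (2 * a)) * b = b := by
      rw [← add_mul, hts, one_mul]
    have hNeg : N (-a) b = N a b := by
      rw [habs (-a) b, abs_neg, abs_of_pos hapos, habs a b, abs_of_pos hapos]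
    have key : N a' b ≤ ((a + a') / (2 * a)) * N a b + ((a - a') / (2 * a)) * N (-a) b := by
      have h := absNorm_convex N htri hhom ht hs a b (-a) b
      rw [h1', h2'] at h
      exact h
    rw [hNeg, ← add_mul, hts, one_mul] at key
    exact key

lemma absNorm_mono_right (habs : ∀ a b : ℝ, N a b = N |a| |b|)
    (htri : ∀ a b c d : ℝ, N (a + c) (b + d) ≤ N a b + N c d)
    (hhom : ∀ t a b : ℝ, N (t * a) (t * b) = |t| * N a b)
    (a : ℝ) {b b' : ℝ} (h0 : 0 ≤ b') (h1 : b' ≤ b) : N a b' ≤ N a b := by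
  rcases eq_or_lt_of_le (h0.trans h1) with h | hbpos
  · have hb : b = 0 := h.symm
    have hb' : b' = 0 := le_antisymm (hb ▸ h1) h0
    rw [hb, hb']
  · have hb : b ≠ 0 := ne_of_gt hbpos
    have ht : 0 ≤ (b + b') / (2 * b) := div_nonneg (by linarith) (by linarith)
    have hs : 0 ≤ (b - b') / (2 * b) := div_nonneg (by linarith) (by linarith)
    have hts : (b + b') / (2 * b) + (b - b') / (2 * b) = 1 := by field_simp; ring
    have h1' : ((b + b') / (2 * b)) * b + ((b - b') / (2 * b)) * (-b) = b' := by
      field_simp; ring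
    have h2' : ((b + b') / (2 * b)) * a + ((b - b') / (2 * b)) * a = a := by
      rw [← add_mul, hts, one_mul]
    have hNeg : N a (-b) = N a b := by
      rw [habs a (-b), abs_neg, abs_of_pos hbpos, habs a b, abs_of_pos hbpos]
    have key : N a b' ≤ ((b + b') / (2 * b)) * N a b + ((b - b') / (2 * b)) * N a (-b) := by
      have h := absNorm_convex N htri hhom ht hs a b a (-b)
      rw [h1', h2'] at h
      exact h
    rw [hNeg, ← add_mul, hts, one_mul] at key
    exact key

lemma absNorm_mono (habs : ∀ a b : ℝ, N a b = N |a| |b|)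
    (htri : ∀ a b c d : ℝ, N (a + c) (b + d) ≤ N a b + N c d)
    (hhom : ∀ t a b : ℝ, N (t * a) (t * b) = |t| * N a b)
    {a a' b b' : ℝ} (ha0 : 0 ≤ a') (ha1 : a' ≤ a) (hb0 : 0 ≤ b') (hb1 : b' ≤ b) :
    N a' b' ≤ N a b :=
  (absNorm_mono_right N habs htri hhom a' hb0 hb1).trans
    (absNorm_mono_left N habs htri hhom b ha0 ha1)

end Aux

theorem superDelta_absolute_sum {X Y : Type*} [NormedAddCommGroup X] [NormedSpace ℝ X]
    [NormedAddCommGroup Y] [NormedSpace ℝ Y] [CompleteSpace X] [CompleteSpace Y]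
    (N : ℝ → ℝ → ℝ)
    (habs : ∀ a b : ℝ, N a b = N |a| |b|)
    (hnorm₁ : N 1 0 = 1) (hnorm₂ : N 0 1 = 1)
    (htri : ∀ a b c d : ℝ, N (a + c) (b + d) ≤ N a b + N c d)
    (hhom : ∀ t a b : ℝ, N (t * a) (t * b) = |t| * N a b)
    (hdef : ∀ a b : ℝ, N a b = 0 → a = 0 ∧ b = 0)
    (x : X) (y : Y) (hx : ‖x‖ = 1) (hy : ‖y‖ = 1)
    (hxD : SuperDeltaPoint x) (hyD : SuperDeltaPoint y)
    (a b : ℝ) (hab : N a b = 1) :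
    ∀ V : Set (X × Y),
      (∃ U : Set (X × Y),
        IsOpen (show Set (WeakSpace ℝ X × WeakSpace ℝ Y) from U) ∧
        V = U ∩ {p : X × Y | N ‖p.1‖ ‖p.2‖ ≤ 1}) →
      (a • x, b • y) ∈ V →
      ∀ ε > 0, ∃ q ∈ V, 2 - ε < N ‖a • x - q.1‖ ‖b • y - q.2‖ := by
  rintro V ⟨U, hUopen, rfl⟩ ⟨hmemU, hmemB⟩ ε hε
  set δ := min (ε / 2) 1 with hδ_def
  have hδpos : 0 < δ := lt_min (by linarith) one_pos
  have hδ1 : δ ≤ 1 := min_le_right _ _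
  have hδε : δ < ε := lt_of_le_of_lt (min_le_left _ _) (by linarith)
  -- split the product open set
  obtain ⟨U₁, U₂, hU₁, hU₂, hmem₁, hmem₂, hsub⟩ :=
    isOpen_prod_iff.mp hUopen (a • x) (b • y) hmemU
  -- weakly open neighborhoods of x and y
  have habN : N |a| |b| = 1 := (habs a b) ▸ hab
  -- the scaling maps are weakly continuous
  have hcont₁ : Continuous (fun x' : WeakSpace ℝ X => a • x' : WeakSpace ℝ X → WeakSpace ℝ X) := by
    have := (WeakSpace.map (a • ContinuousLinearMap.id ℝ X)).continuous
    convert this using 1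
    funext z
    rfl
  have hcont₂ : Continuous (fun y' : WeakSpace ℝ Y => b • y' : WeakSpace ℝ Y → WeakSpace ℝ Y) := by
    have := (WeakSpace.map (b • ContinuousLinearMap.id ℝ Y)).continuous
    convert this using 1
    funext z
    rfl
  set W₁ : Set X := {x' : X | a • x' ∈ U₁} ∩ closedBall 0 1 with hW₁_def
  set W₂ : Set Y := {y' : Y | b • y' ∈ U₂} ∩ closedBall 0 1 with hW₂_def
  have hW₁open : RelWeakOpen W₁ :=
    ⟨{x' : X | a • x' ∈ U₁}, hU₁.preimage hcont₁, rfl⟩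
  have hW₂open : RelWeakOpen W₂ :=
    ⟨{y' : Y | b • y' ∈ U₂}, hU₂.preimage hcont₂, rfl⟩
  have hxW : x ∈ W₁ := ⟨hmem₁, by simp [hx]⟩
  have hyW : y ∈ W₂ := ⟨hmem₂, by simp [hy]⟩
  obtain ⟨x', ⟨hx'U, hx'B⟩, hx'far⟩ := hxD W₁ hW₁open hxW δ hδpos
  obtain ⟨y', ⟨hy'U, hy'B⟩, hy'far⟩ := hyD W₂ hW₂open hyW δ hδpos
  refine ⟨(a • x', b • y'), ⟨hsub ⟨hx'U, hy'U⟩, ?_⟩, ?_⟩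
  · -- norm bound
    show N ‖a • x'‖ ‖b • y'‖ ≤ 1
    have hx'n : ‖x'‖ ≤ 1 := by simpa using hx'B
    have hy'n : ‖y'‖ ≤ 1 := by simpa using hy'B
    have h1 : ‖a • x'‖ ≤ |a| := by
      rw [norm_smul]; simpa using mul_le_of_le_one_right (abs_nonneg a) hx'n
    have h2 : ‖b • y'‖ ≤ |b| := by
      rw [norm_smul]; simpa using mul_le_of_le_one_right (abs_nonneg b) hy'n
    calc N ‖a • x'‖ ‖b • y'‖ ≤ N |a| |b| :=
          absNorm_mono N habs htri hhom (norm_nonneg _) h1 (norm_nonneg _) h2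
      _ = 1 := habN
  · -- distance bound
    have hd1 : ‖a • x - a • x'‖ = |a| * ‖x - x'‖ := by rw [← smul_sub, norm_smul, Real.norm_eq_abs]
    have hd2 : ‖b • y - b • y'‖ = |b| * ‖y - y'‖ := by rw [← smul_sub, norm_smul, Real.norm_eq_abs]
    have hδ2 : (0:ℝ) ≤ 2 - δ := by linarith
    have key : N ((2 - δ) * |a|) ((2 - δ) * |b|) ≤ N ‖a • x - a • x'‖ ‖b • y - b • y'‖ := by
      apply absNorm_mono N habs htri hhom
      · exact mul_nonneg hδ2 (abs_nonneg a)
      · rw [hd1]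
        calc (2 - δ) * |a| = |a| * (2 - δ) := mul_comm _ _
          _ ≤ |a| * ‖x - x'‖ := mul_le_mul_of_nonneg_left (le_of_lt hx'far) (abs_nonneg a)
      · exact mul_nonneg hδ2 (abs_nonneg b)
      · rw [hd2]
        calc (2 - δ) * |b| = |b| * (2 - δ) := mul_comm _ _
          _ ≤ |b| * ‖y - y'‖ := mul_le_mul_of_nonneg_left (le_of_lt hy'far) (abs_nonneg b)
    have heq : N ((2 - δ) * |a|) ((2 - δ) * |b|) = 2 - δ := by
      rw [hhom, abs_of_nonneg (by linarith : (0:ℝ) ≤ 2 - δ), habN, mul_one]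
    calc 2 - ε < 2 - δ := by linarith
      _ = N ((2 - δ) * |a|) ((2 - δ) * |b|) := heq.symm
      _ ≤ _ := key
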